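/- Let G be a non-trivial game on n binary players, let π̂(G) be the empirical proportion of equilibria computed from a dataset D, and let π̄(G) = P_{x∼Q}[x ∈ NE(G)] for a distribution Q on {−1,+1}^n; write L̂(G,q) for the average log-likelihood of D and L̄(G,q) = E_{x∼Q}[log p_{(G,q)}(x)]. Then for any 0 < q'' < q' < q < 1 and any ε > 0: if |L̂(G,q) − L̄(G,q)| ≤ ε/2 and |L̂(G,q'') − L̄(G,q'')| ≤ ε/2, then |L̂(G,q') − L̄(G,q')| ≤ ε/2. (In fact, L̂(G,q) − L̄(G,q) = (π̂(G) − π̄(G))·log( (q/(1−q))·((1−π(G))/π(G)) ), which is monotone in q.) -/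

import Mathlib

open Finset
open scoped Classical BigOperators

/-- The hypercube `{-1,+1}^n` of joint actions, as a finite set of real vectors. -/
noncomputable def cube (n : ℕ) : Finset (Fin n → ℝ) :=
  (Finset.univ : Finset (Fin n → Bool)).image (fun s i => if s i then (1 : ℝ) else -1)

/-- The generative-model PMF `p_{(N,q)}(x) = q·1[x∈N]/|N| + (1−q)·1[x∉N]/(2^n − |N|)`. -/
noncomputable def gpmf (n : ℕ) (N : Finset (Fin n → ℝ)) (q : ℝ) (x : Fin n → ℝ) : ℝ :=
  q * (if x ∈ N then 1 else 0) / (N.card : ℝ) +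
    (1 - q) * (if x ∉ N then 1 else 0) / ((2 : ℝ) ^ n - (N.card : ℝ))

/-- Average log-likelihood `L̂(G,q) = (1/m) ∑_l log p_{(G,q)}(x^{(l)})`. -/
noncomputable def avgLL (n m : ℕ) (N : Finset (Fin n → ℝ)) (q : ℝ)
    (xs : Fin m → Fin n → ℝ) : ℝ :=
  (1 / (m : ℝ)) * ∑ l, Real.log (gpmf n N q (xs l))

/-- Expected log-likelihood `L̄(G,q) = E_{x∼Q}[log p_{(G,q)}(x)]` for a distribution `Q`
on `{-1,+1}^n` given by its probability mass function. -/
noncomputable def expLL (n : ℕ) (Q : (Fin n → ℝ) → ℝ) (N : Finset (Fin n → ℝ)) (q : ℝ) : ℝ :=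
  ∑ x ∈ cube n, Q x * Real.log (gpmf n N q x)

/-- for `0 < q'' < q' < q < 1`, uniform closeness of `L̂` and `L̄` at the
extreme values `q` and `q''` implies closeness at the intermediate value `q'`. -/
theorem stmt3 (n m : ℕ) (hm : 1 ≤ m) (N : Finset (Fin n → ℝ)) (hsub : N ⊆ cube n)
    (hpos : 0 < N.card) (hlt : N.card < 2 ^ n)
    (xs : Fin m → Fin n → ℝ) (hxs : ∀ l, xs l ∈ cube n)
    (Q : (Fin n → ℝ) → ℝ) (hQ0 : ∀ x, 0 ≤ Q x) (hQ1 : ∑ x ∈ cube n, Q x = 1)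
    (q q' q'' : ℝ) (h0 : 0 < q'') (h1 : q'' < q') (h2 : q' < q) (h3 : q < 1)
    (ε : ℝ) (hε : 0 < ε)
    (ha : |avgLL n m N q xs - expLL n Q N q| ≤ ε / 2)
    (hb : |avgLL n m N q'' xs - expLL n Q N q''| ≤ ε / 2) :
    |avgLL n m N q' xs - expLL n Q N q'| ≤ ε / 2 := by
  have hK : (0 : ℝ) < (N.card : ℝ) := by exact_mod_cast hpos
  have hT : (0 : ℝ) < (2 : ℝ) ^ n - (N.card : ℝ) := by
    have : ((N.card : ℝ)) < ((2 ^ n : ℕ) : ℝ) := by exact_mod_cast hlt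
    push_cast at this
    linarith
  set K : ℝ := (N.card : ℝ) with hKdef
  set T : ℝ := (2 : ℝ) ^ n - (N.card : ℝ) with hTdef
  set g : ℝ → ℝ := fun t => Real.log (t / K) - Real.log ((1 - t) / T) with hgdef
  set c : ℝ := (1 / (m : ℝ)) * ∑ l, (if xs l ∈ N then (1:ℝ) else 0)
      - ∑ x ∈ cube n, Q x * (if x ∈ N then (1:ℝ) else 0) with hcdef
  have hm0 : (m : ℝ) ≠ 0 := by
    have : (0:ℕ) < m := hm
    positivity
  have hlog : ∀ t : ℝ, 0 < t → t < 1 → ∀ x : Fin n → ℝ,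
      Real.log (gpmf n N t x)
        = (if x ∈ N then (1:ℝ) else 0) * g t + Real.log ((1 - t) / T) := by
    intro t ht0 ht1 x
    by_cases hx : x ∈ N
    · have : gpmf n N t x = t / K := by
        simp [gpmf, hx, hKdef]
      rw [this]
      simp [hx, hgdef]
    · have : gpmf n N t x = (1 - t) / T := by
        simp [gpmf, hx, hTdef]
      rw [this]
      simp [hx]
  have key : ∀ t : ℝ, 0 < t → t < 1 →
      avgLL n m N t xs - expLL n Q N t = c * g t := by
    intro t ht0 ht1
    have h1 : avgLL n m N t xs
        = (1 / (m : ℝ)) * (∑ l, (if xs l ∈ N then (1:ℝ) else 0)) * g t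
          + Real.log ((1 - t) / T) := by
      unfold avgLL
      rw [Finset.sum_congr rfl (fun l _ => hlog t ht0 ht1 (xs l))]
      rw [Finset.sum_add_distrib, Finset.sum_const, ← Finset.sum_mul]
      simp only [Finset.card_univ, Fintype.card_fin, nsmul_eq_mul]
      field_simp
    have h2 : expLL n Q N t
        = (∑ x ∈ cube n, Q x * (if x ∈ N then (1:ℝ) else 0)) * g t
          + Real.log ((1 - t) / T) := by
      unfold expLL
      rw [Finset.sum_congr rfl (fun x _ => by rw [hlog t ht0 ht1 x])]
      have : ∀ x ∈ cube n, Q x * ((if x ∈ N then (1:ℝ) else 0) * g t + Real.log ((1 - t) / T))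
          = Q x * (if x ∈ N then (1:ℝ) else 0) * g t + Q x * Real.log ((1 - t) / T) := by
        intro x _; ring
      rw [Finset.sum_congr rfl this, Finset.sum_add_distrib, ← Finset.sum_mul,
        ← Finset.sum_mul, hQ1]
      ring
    rw [h1, h2, hcdef]
    ring
  -- monotonicity of g
  have hgmono : ∀ s t : ℝ, 0 < s → s ≤ t → t < 1 → g s ≤ g t := by
    intro s t hs hst ht
    have hs1 : 0 < s / K := by positivity
    have ht1 : 0 < (1 - t) / T := by
      have : 0 < 1 - t := by linarith
      positivity
    have h1 : Real.log (s / K) ≤ Real.log (t / K) :=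
      Real.log_le_log hs1 (by gcongr)
    have h2 : Real.log ((1 - t) / T) ≤ Real.log ((1 - s) / T) :=
      Real.log_le_log ht1 (by gcongr <;> linarith)
    simp only [hgdef]
    linarith
  rw [key q' (by linarith) (by linarith)]
  rw [key q (by linarith) h3] at ha
  rw [key q'' h0 (by linarith)] at hb
  have hg1 : g q'' ≤ g q' := hgmono _ _ h0 h1.le (by linarith)
  have hg2 : g q' ≤ g q := hgmono _ _ (by linarith) h2.le h3
  rw [abs_le] at ha hb ⊢
  clear_value c g
  rcases le_total 0 c with hc | hc
  · have e1 := mul_le_mul_of_nonneg_left hg1 hc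
    have e2 := mul_le_mul_of_nonneg_left hg2 hc
    exact ⟨by linarith [hb.1], by linarith [ha.2]⟩
  · have e1 := mul_le_mul_of_nonpos_left hg1 hc
    have e2 := mul_le_mul_of_nonpos_left hg2 hc
    exact ⟨by linarith [ha.1], by linarith [hb.2]⟩
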